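/- (Proposition 2.A.) Let A, A^D be real n×n matrices, B a real n×m matrix, K a real m×n matrix, F = A + B K, and β a real n̄×n matrix. Let δû : ℕ → ℝᵐ with ‖δû(j)‖ ≤ ρ for all j, and define δx̂(0) = 0, δx̂(j+1) = A^D δx̂(j) + B δû(j); δx(0) = 0, δx(j+1) = A δx(j) + B(δû(j) + K(δx(j) − δx̂(j))); and ε(j) = δx(j) − δx̂(j). Then for every N ≥ 2, ‖β ε(N)‖ ≤ Σ_{j=2}^{N} ‖β F^{N−j}(A − A^D)‖ · g(j−1), where g(j) := ρ · Σ_{r=1}^{j} ‖(A^D)^{j−r} B‖. -/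

import Mathlib

open Matrix Finset Filter Topology

/-- Operator norm of a real matrix, induced by the Euclidean norms on domain and codomain. -/
noncomputable def opN {α β : Type*} [Fintype α] [Fintype β] [DecidableEq β]
    (A : Matrix α β ℝ) : ℝ :=
  ‖LinearMap.toContinuousLinearMap (Matrix.toEuclideanLin A)‖

/-- A real matrix acting on Euclidean vectors. -/
noncomputable def appE {α β : Type*} [Fintype α] [Fintype β] [DecidableEq β]
    (A : Matrix α β ℝ) (v : EuclideanSpace ℝ β) : EuclideanSpace ℝ α :=
  Matrix.toEuclideanLin A v

lemma appE_mul {α β γ : Type*} [Fintype α] [Fintype β] [Fintype γ]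
    [DecidableEq β] [DecidableEq γ]
    (M : Matrix α β ℝ) (N : Matrix β γ ℝ) (v : EuclideanSpace ℝ γ) :
    appE (M * N) v = appE M (appE N v) := by
  simp [appE, Matrix.toEuclideanLin_apply, Matrix.mulVec_mulVec]

lemma appE_add {α β : Type*} [Fintype α] [Fintype β] [DecidableEq β]
    (M : Matrix α β ℝ) (u v : EuclideanSpace ℝ β) :
    appE M (u + v) = appE M u + appE M v := map_add _ _ _

lemma appE_sub {α β : Type*} [Fintype α] [Fintype β] [DecidableEq β]
    (M : Matrix α β ℝ) (u v : EuclideanSpace ℝ β) :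
    appE M (u - v) = appE M u - appE M v := map_sub _ _ _

lemma appE_matAdd {α β : Type*} [Fintype α] [Fintype β] [DecidableEq β]
    (M N : Matrix α β ℝ) (v : EuclideanSpace ℝ β) :
    appE (M + N) v = appE M v + appE N v := by
  simp [appE, map_add, LinearMap.add_apply]

lemma appE_matSub {α β : Type*} [Fintype α] [Fintype β] [DecidableEq β]
    (M N : Matrix α β ℝ) (v : EuclideanSpace ℝ β) :
    appE (M - N) v = appE M v - appE N v := by
  simp [appE, map_sub, LinearMap.sub_apply]

lemma appE_zero {α β : Type*} [Fintype α] [Fintype β] [DecidableEq β]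
    (M : Matrix α β ℝ) : appE M (0 : EuclideanSpace ℝ β) = 0 := map_zero _

lemma appE_sum {α β ι : Type*} [Fintype α] [Fintype β] [DecidableEq β]
    (M : Matrix α β ℝ) (s : Finset ι) (f : ι → EuclideanSpace ℝ β) :
    appE M (∑ i ∈ s, f i) = ∑ i ∈ s, appE M (f i) :=
  map_sum (Matrix.toEuclideanLin M : _ →ₗ[ℝ] _) _ _

lemma appE_le {α β : Type*} [Fintype α] [Fintype β] [DecidableEq β]
    (M : Matrix α β ℝ) (v : EuclideanSpace ℝ β) : ‖appE M v‖ ≤ opN M * ‖v‖ :=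
  (LinearMap.toContinuousLinearMap (Matrix.toEuclideanLin M)).le_opNorm v

lemma opN_nonneg {α β : Type*} [Fintype α] [Fintype β] [DecidableEq β]
    (M : Matrix α β ℝ) : 0 ≤ opN M := norm_nonneg _

lemma Icc_succ_insert (a b : ℕ) (h : a ≤ b + 1) :
    Finset.Icc a (b + 1) = insert (b + 1) (Finset.Icc a b) := by
  ext x; simp only [Finset.mem_Icc, Finset.mem_insert]; omega

/-- Proposition 2.A: bound on the projected error `‖β ε(N)‖`, i.e. the radius `ρ_w`
of the high-level disturbance set. -/
theorem prop2A {n m nb : ℕ} (A AD : Matrix (Fin n) (Fin n) ℝ)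
    (B : Matrix (Fin n) (Fin m) ℝ) (K : Matrix (Fin m) (Fin n) ℝ)
    (F : Matrix (Fin n) (Fin n) ℝ) (hF : F = A + B * K)
    (β : Matrix (Fin nb) (Fin n) ℝ)
    (ρ : ℝ) (du : ℕ → EuclideanSpace ℝ (Fin m)) (hdu : ∀ j, ‖du j‖ ≤ ρ)
    (dxh : ℕ → EuclideanSpace ℝ (Fin n)) (hdxh0 : dxh 0 = 0)
    (hdxh : ∀ j, dxh (j + 1) = appE AD (dxh j) + appE B (du j))
    (dx : ℕ → EuclideanSpace ℝ (Fin n)) (hdx0 : dx 0 = 0)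
    (hdx : ∀ j, dx (j + 1) = appE A (dx j) + appE B (du j + appE K (dx j - dxh j)))
    (ε : ℕ → EuclideanSpace ℝ (Fin n)) (hε : ∀ j, ε j = dx j - dxh j)
    (g : ℕ → ℝ) (hg : ∀ j, g j = ρ * ∑ r ∈ Finset.Icc 1 j, opN (AD ^ (j - r) * B)) :
    ∀ N, 2 ≤ N →
      ‖appE β (ε N)‖ ≤
        ∑ j ∈ Finset.Icc 2 N, opN (β * F ^ (N - j) * (A - AD)) * g (j - 1) := by
  -- ρ is nonnegative
  have hρ : (0:ℝ) ≤ ρ := le_trans (norm_nonneg _) (hdu 0)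
  -- error recursion : ε (j+1) = F ε j + (A - AD) dxh j
  have hεrec : ∀ j, ε (j + 1) = appE F (ε j) + appE (A - AD) (dxh j) := by
    intro j
    have h1 : ε (j + 1) = dx (j + 1) - dxh (j + 1) := hε _
    have hεj : ε j = dx j - dxh j := hε j
    rw [h1, hdx j, hdxh j, hF, hεj]
    rw [appE_add B, ← appE_mul B K, appE_matAdd, appE_matSub, appE_sub, appE_sub]
    abel
  -- closed form for dxh
  have hdxh_form : ∀ j, dxh j = ∑ r ∈ Finset.Icc 1 j,
      appE (AD ^ (j - r) * B) (du (r - 1)) := by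
    intro j
    induction j with
    | zero => simp [hdxh0]
    | succ j ih =>
      rw [hdxh j, ih, appE_sum, Icc_succ_insert 1 j (by omega),
        Finset.sum_insert (by simp), add_comm]
      congr 1
      · simp
      · apply Finset.sum_congr rfl
        intro r hr
        simp only [Finset.mem_Icc] at hr
        have h2 : j + 1 - r = (j - r) + 1 := by omega
        simp only [h2, pow_succ', Matrix.mul_assoc, appE_mul]
  -- norm bound for dxh
  have hdxh_le : ∀ j, ‖dxh j‖ ≤ g j := by
    intro j
    rw [hdxh_form j, hg j, Finset.mul_sum]
    refine le_trans (norm_sum_le _ _) (Finset.sum_le_sum fun r _ => ?_)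
    calc ‖appE (AD ^ (j - r) * B) (du (r - 1))‖
        ≤ opN (AD ^ (j - r) * B) * ‖du (r - 1)‖ := appE_le _ _
      _ ≤ opN (AD ^ (j - r) * B) * ρ :=
          mul_le_mul_of_nonneg_left (hdu _) (opN_nonneg _)
      _ = ρ * opN (AD ^ (j - r) * B) := mul_comm _ _
  -- closed form for ε (valid for N ≥ 1)
  have hε_form : ∀ N, 1 ≤ N → ε N = ∑ j ∈ Finset.Icc 2 N,
      appE (F ^ (N - j) * (A - AD)) (dxh (j - 1)) := by
    intro N hN
    induction N with
    | zero => omega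
    | succ N ih =>
      rcases Nat.eq_or_lt_of_le hN with h1 | h1
      · -- N + 1 = 1, i.e. N = 0
        have hN0 : N = 0 := by omega
        subst hN0
        have hε0 : ε 0 = 0 := by rw [hε, hdx0, hdxh0, sub_zero]
        rw [hεrec 0, hε0, hdxh0, appE_zero, appE_zero]
        simp
      · have hN1 : 1 ≤ N := by omega
        rw [hεrec N, ih hN1, appE_sum, Icc_succ_insert 2 N (by omega),
          Finset.sum_insert (by simp), add_comm]
        congr 1
        · simp
        · apply Finset.sum_congr rfl
          intro j hj
          simp only [Finset.mem_Icc] at hj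
          have h2 : N + 1 - j = (N - j) + 1 := by omega
          simp only [h2, pow_succ', Matrix.mul_assoc, appE_mul]
  -- put it together
  intro N hN
  rw [hε_form N (by omega), appE_sum]
  refine le_trans (norm_sum_le _ _) (Finset.sum_le_sum fun j _ => ?_)
  rw [← appE_mul, ← Matrix.mul_assoc]
  calc ‖appE (β * F ^ (N - j) * (A - AD)) (dxh (j - 1))‖
      ≤ opN (β * F ^ (N - j) * (A - AD)) * ‖dxh (j - 1)‖ := appE_le _ _
    _ ≤ opN (β * F ^ (N - j) * (A - AD)) * g (j - 1) :=
        mul_le_mul_of_nonneg_left (hdxh_le _) (opN_nonneg _)
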